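/- Let H and H' be frames, let λ be a compatible cone with vertex H such that every element of H is a supremum of elements of the form λ_C(a, b), and let λ' be a compatible cone with vertex H'. If σ : H → H' preserves arbitrary suprema and satisfies σ(λ_C(a, b)) = λ'_C(a, b) for every object C of 𝒞 and all a ∈ F(C), b ∈ F'(C), then σ(⊤) = ⊤ and σ(x ⊓ y) = σ(x) ⊓ σ(y) for all x, y ∈ H; that is, σ is a frame homomorphism. -/

import Mathlib

open CategoryTheory CategoryTheory.Limits

universe v u w

lemma term_nonempty {C : Type u} [Category.{v} C] [HasTerminal C]
    (F : C ⥤ Type w) [PreservesFiniteProducts F] : Nonempty (F.obj (⊤_ C)) :=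
  ⟨(PreservesTerminal.iso F).inv ((Types.terminalIso).inv PUnit.unit)⟩

lemma exists_pre {C : Type u} [Category.{v} C] [HasBinaryProducts C]
    (F : C ⥤ Type w) [PreservesFiniteProducts F] (X Y : C) (a : F.obj X) (b : F.obj Y) :
    ∃ z : F.obj (X ⨯ Y), F.map Limits.prod.fst z = a ∧ F.map Limits.prod.snd z = b := by
  let e : F.obj (X ⨯ Y) ≅ F.obj X ⨯ F.obj Y := PreservesLimitPair.iso F X Y
  let e2 := Types.binaryProductIso (F.obj X) (F.obj Y)
  refine ⟨(e ≪≫ e2).inv (a, b), ?_, ?_⟩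
  · have h : (e ≪≫ e2).hom ((e ≪≫ e2).inv (a,b)) = (a,b) := ConcreteCategory.congr_hom ((e ≪≫ e2).inv_hom_id) _
    have h2 : ∀ z, (F.map Limits.prod.fst z) = ((e ≪≫ e2).hom z).1 := by
      intro z
      have := ConcreteCategory.congr_hom (Types.binaryProductIso_hom_comp_fst (F.obj X) (F.obj Y)) (e.hom z)
      have h3 := ConcreteCategory.congr_hom (prodComparison_fst F X Y) z
      simp only [types_comp_apply] at this h3
      simp [e, e2, PreservesLimitPair.iso_hom, this, h3]
    rw [h2, h]
  · have h : (e ≪≫ e2).hom ((e ≪≫ e2).inv (a,b)) = (a,b) := ConcreteCategory.congr_hom ((e ≪≫ e2).inv_hom_id) _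
    have h2 : ∀ z, (F.map Limits.prod.snd z) = ((e ≪≫ e2).hom z).2 := by
      intro z
      have := ConcreteCategory.congr_hom (Types.binaryProductIso_hom_comp_snd (F.obj X) (F.obj Y)) (e.hom z)
      have h3 := ConcreteCategory.congr_hom (prodComparison_snd F X Y) z
      simp only [types_comp_apply] at this h3
      simp [e, e2, PreservesLimitPair.iso_hom, this, h3]
    rw [h2, h]

/-- Let `H`, `H'` be frames, `λ` a compatible cone with vertex `H` whose values
`λ_C(a, b)` generate `H` under suprema, and `λ'` a compatible cone with vertex
`H'`.  Any sup-preserving `σ : H → H'` with `σ(λ_C(a, b)) = λ'_C(a, b)` sends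
`⊤` to `⊤` and preserves binary infima; that is, `σ` is a frame homomorphism. -/
theorem sup_morphism_of_compatible_cones_is_frameHom
    {H : Type w} [Order.Frame H] {H' : Type w} [Order.Frame H']
    {C : Type u} [Category.{v} C] [HasTerminal C] [HasBinaryProducts C]
    (F F' : C ⥤ Type w)
    [PreservesFiniteProducts F] [PreservesFiniteProducts F']
    (lam : ∀ X : C, F.obj X → F'.obj X → H)
    (lam' : ∀ X : C, F.obj X → F'.obj X → H')
    -- λ is compatible
    (hC1 : ∀ (X Y : C) (z : F.obj (X ⨯ Y)) (z' : F'.obj (X ⨯ Y)),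
      lam (X ⨯ Y) z z' =
        lam X (F.map Limits.prod.fst z) (F'.map Limits.prod.fst z') ⊓
          lam Y (F.map Limits.prod.snd z) (F'.map Limits.prod.snd z'))
    (hC2 : ∀ (z : F.obj (⊤_ C)) (z' : F'.obj (⊤_ C)), lam (⊤_ C) z z' = ⊤)
    -- λ' is compatible
    (hC1' : ∀ (X Y : C) (z : F.obj (X ⨯ Y)) (z' : F'.obj (X ⨯ Y)),
      lam' (X ⨯ Y) z z' =
        lam' X (F.map Limits.prod.fst z) (F'.map Limits.prod.fst z') ⊓
          lam' Y (F.map Limits.prod.snd z) (F'.map Limits.prod.snd z'))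
    (hC2' : ∀ (z : F.obj (⊤_ C)) (z' : F'.obj (⊤_ C)), lam' (⊤_ C) z z' = ⊤)
    -- the values of λ generate H under suprema
    (hgen : ∀ w : H, ∃ s : Set H,
      (∀ h ∈ s, ∃ (X : C) (a : F.obj X) (b : F'.obj X), h = lam X a b) ∧ w = sSup s)
    (σ : H → H')
    (hσ_sSup : ∀ s : Set H, σ (sSup s) = ⨆ x ∈ s, σ x)
    (hσ_lam : ∀ (X : C) (a : F.obj X) (b : F'.obj X), σ (lam X a b) = lam' X a b) :
    σ ⊤ = ⊤ ∧ ∀ x y : H, σ (x ⊓ y) = σ x ⊓ σ y := by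
  obtain ⟨z0⟩ := term_nonempty F
  obtain ⟨z0'⟩ := term_nonempty F'
  -- key: σ preserves infima of generators
  have key : ∀ (X Y : C) (a : F.obj X) (b : F'.obj X) (c : F.obj Y) (d : F'.obj Y),
      σ (lam X a b ⊓ lam Y c d) = σ (lam X a b) ⊓ σ (lam Y c d) := by
    intro X Y a b c d
    obtain ⟨z, hz1, hz2⟩ := exists_pre F X Y a c
    obtain ⟨z', hz1', hz2'⟩ := exists_pre F' X Y b d
    have h1 := hC1 X Y z z'
    rw [hz1, hz2, hz1', hz2'] at h1
    have h2 := hC1' X Y z z'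
    rw [hz1, hz2, hz1', hz2'] at h2
    rw [← h1, hσ_lam, h2, hσ_lam, hσ_lam]
  constructor
  · rw [← hC2 z0 z0', hσ_lam, hC2' z0 z0']
  · intro x y
    obtain ⟨s, hs, hx⟩ := hgen x
    obtain ⟨t, ht, hy⟩ := hgen y
    subst hx; subst hy
    rw [sSup_inf_sSup, ← sSup_image, hσ_sSup, hσ_sSup, hσ_sSup, biSup_inf_biSup, iSup_image]
    refine iSup_congr fun p => iSup_congr fun hp => ?_
    obtain ⟨X, a, b, h1⟩ := hs p.1 hp.1
    obtain ⟨Y, c, d, h2⟩ := ht p.2 hp.2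
    rw [h1, h2]
    exact key X Y a b c d
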